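/- Let S₁₁ be a weighted permutation matrix over a field, E₁₁ = S₁₁^{→1}, I₁₁ = E₁₁E₁₁^T, J₁₁ = E₁₁^TE₁₁, and Ŝ₁₁ = (1/β)(α S₁₁ + S̄₁₁) for nonzero scalars α, β. Then (1−I₁₁) Ŝ₁₁ = (1/β) S̄₁₁ = Ŝ₁₁ (1−J₁₁), S₁₁^+ (1−I₁₁) = 0, and S₁₁^+ Ŝ₁₁ = (α/β) J₁₁. -/

import Mathlib

open Matrix

/-- A weighted permutation matrix: at most one nonzero entry in each row and each column. -/
def IsWeightedPerm {n : ℕ} {F : Type*} [Field F] (S : Matrix (Fin n) (Fin n) F) : Prop :=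
  (∀ i j k, S i j ≠ 0 → S i k ≠ 0 → j = k) ∧
  (∀ j i k, S i j ≠ 0 → S k j ≠ 0 → i = k)

/-- The unit mapping `S → S^{→1}`: replace every nonzero entry by `1`. -/
noncomputable def unitMap {n : ℕ} {F : Type*} [Field F] (S : Matrix (Fin n) (Fin n) F) :
    Matrix (Fin n) (Fin n) F :=
  Matrix.of fun i j => letI := Classical.propDecidable (S i j = 0); if S i j = 0 then 0 else 1

/-- The pseudoinverse `S⁺` of a weighted permutation matrix:
transpose and invert each nonzero entry (in a field, `0⁻¹ = 0`). -/
def pinv {n : ℕ} {F : Type*} [Field F] (S : Matrix (Fin n) (Fin n) F) :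
    Matrix (Fin n) (Fin n) F :=
  Matrix.of fun i j => (S j i)⁻¹

/-- `T` is a complement `S̄ = S^{Ext} - S` of `S`: a (0,1)-matrix supported on the
zero rows × zero columns of `S`, such that the combined pattern of `S` and `T`
has exactly one nonzero entry in each row and each column. -/
def IsComplement {n : ℕ} {F : Type*} [Field F] (S T : Matrix (Fin n) (Fin n) F) : Prop :=
  (∀ i j, T i j = 0 ∨ T i j = 1) ∧
  (∀ i j, T i j ≠ 0 → (∀ k, S i k = 0) ∧ (∀ k, S k j = 0)) ∧
  (∀ i, ∃! j, S i j ≠ 0 ∨ T i j ≠ 0) ∧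
  (∀ j, ∃! i, S i j ≠ 0 ∨ T i j ≠ 0)


open Classical in
lemma unit_apply {n : ℕ} {F : Type*} [Field F] (S : Matrix (Fin n) (Fin n) F) (i j) :
    unitMap S i j = if S i j = 0 then 0 else 1 := by
  simp [unitMap]

lemma EET_symm {n : ℕ} {F : Type*} [Field F] (S : Matrix (Fin n) (Fin n) F) (k j : Fin n) :
    (unitMap S * (unitMap S)ᵀ) k j = (unitMap S * (unitMap S)ᵀ) j k := by
  have h : (unitMap S * (unitMap S)ᵀ)ᵀ = unitMap S * (unitMap S)ᵀ := by
    rw [transpose_mul, transpose_transpose]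
  conv_lhs => rw [← h, transpose_apply]

lemma ETE_symm {n : ℕ} {F : Type*} [Field F] (S : Matrix (Fin n) (Fin n) F) (k j : Fin n) :
    ((unitMap S)ᵀ * unitMap S) k j = ((unitMap S)ᵀ * unitMap S) j k := by
  have h : ((unitMap S)ᵀ * unitMap S)ᵀ = (unitMap S)ᵀ * unitMap S := by
    rw [transpose_mul, transpose_transpose]
  conv_lhs => rw [← h, transpose_apply]

lemma EET_eq {n : ℕ} {F : Type*} [Field F] {S : Matrix (Fin n) (Fin n) F}
    (hS : IsWeightedPerm S) {i j0 : Fin n} (h : S i j0 ≠ 0) (k : Fin n) :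
    (unitMap S * (unitMap S)ᵀ) i k = if k = i then 1 else 0 := by
  rw [mul_apply]
  rw [Finset.sum_eq_single j0]
  · rw [transpose_apply, unit_apply, unit_apply, if_neg h, one_mul]
    by_cases hk : S k j0 = 0
    · rw [if_pos hk, if_neg]
      intro hki; subst hki; exact h hk
    · rw [if_neg hk, if_pos (hS.2 j0 k i hk h)]
  · intro l _ hl
    rw [unit_apply, if_pos, zero_mul]
    by_contra hz
    exact hl (hS.1 i l j0 hz h)
  · simp

lemma EET_zero {n : ℕ} {F : Type*} [Field F] {S : Matrix (Fin n) (Fin n) F}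
    {i : Fin n} (h : ∀ l, S i l = 0) (k : Fin n) :
    (unitMap S * (unitMap S)ᵀ) i k = 0 := by
  rw [mul_apply]
  apply Finset.sum_eq_zero
  intro l _
  rw [unit_apply, if_pos (h l), zero_mul]

lemma ETE_eq {n : ℕ} {F : Type*} [Field F] {S : Matrix (Fin n) (Fin n) F}
    (hS : IsWeightedPerm S) {j i0 : Fin n} (h : S i0 j ≠ 0) (k : Fin n) :
    ((unitMap S)ᵀ * unitMap S) k j = if k = j then 1 else 0 := by
  rw [mul_apply]
  rw [Finset.sum_eq_single i0]
  · rw [transpose_apply, unit_apply, unit_apply, if_neg h, mul_one]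
    by_cases hk : S i0 k = 0
    · rw [if_pos hk, if_neg]
      intro hkj; subst hkj; exact h hk
    · rw [if_neg hk, if_pos (hS.1 i0 k j hk h)]
  · intro l _ hl
    rw [unit_apply (S := S) l j, if_pos, mul_zero]
    by_contra hz
    exact hl (hS.2 j l i0 hz h)
  · simp

lemma ETE_zero {n : ℕ} {F : Type*} [Field F] {S : Matrix (Fin n) (Fin n) F}
    {j : Fin n} (h : ∀ l, S l j = 0) (k : Fin n) :
    ((unitMap S)ᵀ * unitMap S) k j = 0 := by
  rw [mul_apply]
  apply Finset.sum_eq_zero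
  intro l _
  rw [transpose_apply, unit_apply (S := S) l j, if_pos (h l), mul_zero]

theorem shat_identities {n : ℕ} {F : Type*} [Field F]
    (S Sbar : Matrix (Fin n) (Fin n) F) (a b : F) (ha : a ≠ 0) (hb : b ≠ 0)
    (hS : IsWeightedPerm S) (hSbar : IsComplement S Sbar) :
    (1 - unitMap S * (unitMap S)ᵀ) * (b⁻¹ • (a • S + Sbar)) = b⁻¹ • Sbar ∧
    (b⁻¹ • (a • S + Sbar)) * (1 - (unitMap S)ᵀ * unitMap S) = b⁻¹ • Sbar ∧
    pinv S * (1 - unitMap S * (unitMap S)ᵀ) = 0 ∧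
    pinv S * (b⁻¹ • (a • S + Sbar)) = (a / b) • ((unitMap S)ᵀ * unitMap S)  := by
  have hrow : ∀ i j k, S i k ≠ 0 → Sbar i j = 0 := by
    intro i j k hk
    by_contra hz
    exact hk ((hSbar.2.1 i j hz).1 k)
  have hcol : ∀ i j k, S k j ≠ 0 → Sbar i j = 0 := by
    intro i j k hk
    by_contra hz
    exact hk ((hSbar.2.1 i j hz).2 k)
  refine ⟨?_, ?_, ?_, ?_⟩
  · ext i j
    rw [sub_mul, one_mul, Matrix.sub_apply, Matrix.smul_apply, Matrix.add_apply, Matrix.smul_apply, Matrix.smul_apply]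
    by_cases hr : ∀ l, S i l = 0
    · rw [mul_apply]
      have hz : ∀ k ∈ Finset.univ, (unitMap S * (unitMap S)ᵀ) i k *
          (b⁻¹ • (a • S + Sbar)) k j = 0 := by
        intro k _; rw [EET_zero hr, zero_mul]
      rw [Finset.sum_eq_zero hz, hr j]
      simp
    · push_neg at hr
      obtain ⟨j0, hj0⟩ := hr
      rw [mul_apply, Finset.sum_eq_single i]
      · rw [EET_eq hS hj0, if_pos rfl, one_mul, Matrix.smul_apply, Matrix.add_apply, Matrix.smul_apply,
          hrow i j j0 hj0]
        simp
      · intro k _ hk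
        rw [EET_eq hS hj0, if_neg hk, zero_mul]
      · simp
  · ext i j
    rw [mul_sub, mul_one, Matrix.sub_apply, Matrix.smul_apply, Matrix.add_apply, Matrix.smul_apply, Matrix.smul_apply]
    by_cases hc : ∀ l, S l j = 0
    · rw [mul_apply]
      have hz : ∀ k ∈ Finset.univ, (b⁻¹ • (a • S + Sbar)) i k *
          ((unitMap S)ᵀ * unitMap S) k j = 0 := by
        intro k _; rw [ETE_zero hc, mul_zero]
      rw [Finset.sum_eq_zero hz, hc i]
      simp
    · push_neg at hc
      obtain ⟨i0, hi0⟩ := hc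
      rw [mul_apply, Finset.sum_eq_single j]
      · rw [ETE_eq hS hi0, if_pos rfl, mul_one, Matrix.smul_apply, Matrix.add_apply, Matrix.smul_apply,
          hcol i j i0 hi0]
        simp
      · intro k _ hk
        rw [ETE_eq hS hi0, if_neg hk, mul_zero]
      · simp
  · ext i j
    rw [mul_sub, mul_one, Matrix.sub_apply, Matrix.zero_apply, sub_eq_zero, mul_apply]
    by_cases hr : ∀ l, S j l = 0
    · rw [Finset.sum_eq_zero, pinv, of_apply, hr i, _root_.inv_zero]
      intro k _
      rw [EET_symm, EET_zero hr, mul_zero]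
    · push_neg at hr
      obtain ⟨j0, hj0⟩ := hr
      rw [Finset.sum_eq_single j]
      · rw [EET_symm, EET_eq hS hj0, if_pos rfl, mul_one]
      · intro k _ hk
        rw [EET_symm, EET_eq hS hj0, if_neg hk, mul_zero]
      · simp
  · ext i j
    rw [Matrix.smul_apply, mul_apply]
    by_cases hc : ∀ l, S l i = 0
    · rw [Finset.sum_eq_zero, ETE_symm, ETE_zero hc, smul_zero]
      intro k _
      rw [pinv, of_apply, hc k, _root_.inv_zero, zero_mul]
    · push_neg at hc
      obtain ⟨k0, hk0⟩ := hc
      rw [Finset.sum_eq_single k0]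
      · rw [pinv, of_apply, Matrix.smul_apply, Matrix.add_apply, Matrix.smul_apply, hrow k0 j i hk0,
          ETE_symm, ETE_eq hS hk0]
        by_cases hij : j = i
        · subst hij
          rw [if_pos rfl, smul_eq_mul, smul_eq_mul, smul_eq_mul, mul_one]
          field_simp
          ring
        · rw [if_neg hij, smul_zero]
          have hz0 : S k0 j = 0 := by
            by_contra hz
            exact hij (hS.1 k0 j i hz hk0)
          rw [hz0]
          simp
      · intro k _ hk
        rw [pinv, of_apply]
        have : S k i = 0 := by
          by_contra hz
          exact hk (hS.2 i k k0 hz hk0)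
        rw [this, _root_.inv_zero, zero_mul]
      · simp
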